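/- For a random permutation of {1,…,n} chosen uniformly, the probability that the number of cycles exceeds 1.1·ln n tends to 0 as n → ∞. -/

import Mathlib

open Equiv Equiv.Perm Finset

variable {α : Type*} [DecidableEq α] [Fintype α]

lemma insert_cycle {c : Equiv.Perm α} (hc : c.IsCycle) {z a : α}
    (hz : c z = z) (ha : c a ≠ a) :
    (Equiv.swap z a * c).IsCycle ∧
      (Equiv.swap z a * c).support = insert z c.support := by
  have haz : a ≠ z := fun h => ha (by rw [h, hz])
  have hzs : z ∉ c.support := by simp [hz]
  have has : a ∈ c.support := mem_support.mpr ha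
  set d := Equiv.swap z a * c with hd
  have hdz : d z = a := by simp [hd, mul_apply, hz]
  -- the iteration lemma
  have aux : ∀ k : ℕ, (∀ j, 0 < j → j ≤ k → (c ^ j) a ≠ a) → (d ^ (k + 1)) z = (c ^ k) a := by
    intro k
    induction k with
    | zero => intro _; simpa using hdz
    | succ k ih =>
      intro h
      have hck : (c ^ (k+1)) a ∈ c.support := pow_apply_mem_support.mpr has
      have h1 : (c ^ (k+1)) a ≠ z := fun hh => hzs (hh ▸ hck)
      have h2 : (c ^ (k+1)) a ≠ a := h (k+1) (Nat.succ_pos _) le_rfl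
      have ihk := ih (fun j hj hjk => h j hj (hjk.trans (Nat.le_succ _)))
      calc (d ^ (k + 1 + 1)) z = d ((d ^ (k+1)) z) := by
            rw [pow_succ', mul_apply]
        _ = d ((c ^ k) a) := by rw [ihk]
        _ = Equiv.swap z a ((c ^ (k+1)) a) := by
            rw [hd, mul_apply, ← mul_apply c (c ^ k), ← pow_succ']
        _ = (c ^ (k+1)) a := Equiv.swap_apply_of_ne_of_ne h1 h2
  have hmoved : ∀ y, d y ≠ y → y = z ∨ c y ≠ y := by
    intro y hy
    by_cases h1 : y = z
    · exact Or.inl h1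
    by_cases h2 : c y = y
    · exfalso
      by_cases h3 : y = a
      · exact ha (h3 ▸ h2)
      · exact hy (by simp [hd, mul_apply, h2, Equiv.swap_apply_of_ne_of_ne h1 h3])
    · exact Or.inr h2
  have hcyc : d.IsCycle := by
    refine ⟨z, by rw [hdz]; exact haz, ?_⟩
    intro y hy
    rcases hmoved y hy with rfl | hcy
    · exact Equiv.Perm.SameCycle.refl _ _
    by_cases hya : y = a
    · subst hya; exact ⟨1, by simpa using hdz⟩
    obtain ⟨k, hk⟩ := hc.exists_pow_eq ha hcy
    have hex : ∃ m : ℕ, (c ^ m) a = y := ⟨k, hk⟩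
    classical
    set k₀ := Nat.find hex with hk₀
    have hk₀y : (c ^ k₀) a = y := Nat.find_spec hex
    have haux : ∀ j, 0 < j → j ≤ k₀ → (c ^ j) a ≠ a := by
      intro j hj hjk hja
      have : (c ^ (k₀ - j)) a = y := by
        rw [← hja, ← mul_apply, ← pow_add, Nat.sub_add_cancel hjk, hk₀y]
      have hlt : k₀ - j < k₀ := Nat.sub_lt (lt_of_lt_of_le hj hjk) hj
      exact (Nat.find_min hex hlt) this
    exact ⟨(k₀ + 1 : ℕ), by rw [zpow_natCast, aux k₀ haux, hk₀y]⟩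
  refine ⟨hcyc, ?_⟩
  ext x
  simp only [mem_support, Finset.mem_insert]
  constructor
  · intro hx
    rcases hmoved x hx with h | h
    · exact Or.inl h
    · exact Or.inr h
  · rintro (rfl | hx)
    · rw [hdz]; exact haz
    · have hcx : c x ∈ c.support := apply_mem_support.mpr (mem_support.mpr hx)
      have hxz : x ≠ z := fun h => hzs (h ▸ mem_support.mpr hx)
      have hcxz : c x ≠ z := fun h => hzs (h ▸ hcx)
      by_cases hcxa : c x = a
      · rw [hd, mul_apply, hcxa, Equiv.swap_apply_right]
        exact fun h => hxz h.symm
      · rw [hd, mul_apply, Equiv.swap_apply_of_ne_of_ne hcxz hcxa]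
        exact hx

def xi (σ : Equiv.Perm α) : ℕ :=
  Multiset.card σ.cycleType + Fintype.card {x // σ x = x}

lemma card_fixed (σ : Equiv.Perm α) :
    Fintype.card {x // σ x = x} = Fintype.card α - σ.support.card := by
  classical
  rw [Fintype.card_subtype]
  have h : Finset.univ.filter (fun x => σ x = x) = σ.supportᶜ := by
    ext x; simp [mem_support, not_not]
  rw [h, Finset.card_compl]

lemma xi_eq (σ : Equiv.Perm α) :
    xi σ = Multiset.card σ.cycleType + (Fintype.card α - σ.support.card) := by
  rw [xi, card_fixed]

lemma xi_swap_mul (π : Equiv.Perm α) {z a : α} (hz : π z = z) (ha : a ≠ z) :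
    xi (Equiv.swap z a * π) + 1 = xi π := by
  have hcard : (Equiv.swap z a * π).support.card ≤ Fintype.card α := Finset.card_le_univ _
  have hcardπ : π.support.card ≤ Fintype.card α := Finset.card_le_univ _
  rw [xi_eq, xi_eq]
  by_cases hfix : π a = a
  · have hdisj : (Equiv.swap z a).Disjoint π := by
      intro x
      by_cases h1 : x = z
      · exact Or.inr (h1 ▸ hz)
      by_cases h2 : x = a
      · exact Or.inr (h2 ▸ hfix)
      · exact Or.inl (Equiv.swap_apply_of_ne_of_ne h1 h2)
    have hct : Multiset.card (Equiv.swap z a * π).cycleType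
        = 1 + Multiset.card π.cycleType := by
      rw [hdisj.cycleType_mul, Multiset.card_add, card_cycleType_eq_one.mpr (isCycle_swap (Ne.symm ha))]
    have hs : (Equiv.swap z a * π).support.card = 2 + π.support.card := by
      rw [hdisj.card_support_mul, card_support_swap (Ne.symm ha)]
    omega
  · set c := π.cycleOf a with hc
    have hmem : c ∈ π.cycleFactorsFinset :=
      cycleOf_mem_cycleFactorsFinset_iff.mpr (mem_support.mpr hfix)
    have hdρc : (π * c⁻¹).Disjoint c := disjoint_mul_inv_of_mem_cycleFactorsFinset hmem
    set ρ := π * c⁻¹ with hρ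
    have hπ : π = ρ * c := by rw [hρ, inv_mul_cancel_right]
    have hcyc : c.IsCycle := isCycle_cycleOf π hfix
    have hca : c a ≠ a := by rw [hc, cycleOf_apply_self]; exact hfix
    have hcz : c z = z := by
      have : z ∉ c.support := fun h => by
        have := support_cycleOf_le π a h
        rw [mem_support] at this; exact this hz
      simpa [mem_support, not_not] using this
    have hρz : ρ z = z := by
      have hcz' : c⁻¹ z = z := by rw [Equiv.Perm.inv_eq_iff_eq, hcz]
      rw [hρ, mul_apply, hcz', hz]
    have hρa : ρ a = a := (hdρc a).resolve_right hca
    obtain ⟨hdc, hds⟩ := insert_cycle hcyc hcz hca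
    set d := Equiv.swap z a * c with hdd
    have hρd : ρ.Disjoint d := by
      intro x
      rcases hdρc x with h | h
      · exact Or.inl h
      · by_cases h1 : x = z
        · exact Or.inl (h1 ▸ hρz)
        by_cases h2 : x = a
        · exact Or.inl (h2 ▸ hρa)
        · exact Or.inr (by rw [hdd, mul_apply, h, Equiv.swap_apply_of_ne_of_ne h1 h2])
    have hcommute : Equiv.swap z a * ρ = ρ * Equiv.swap z a := by
      have : (Equiv.swap z a).Disjoint ρ := by
        intro x
        by_cases h1 : x = z
        · exact Or.inr (h1 ▸ hρz)
        by_cases h2 : x = a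
        · exact Or.inr (h2 ▸ hρa)
        · exact Or.inl (Equiv.swap_apply_of_ne_of_ne h1 h2)
      exact this.commute
    have hfact : Equiv.swap z a * π = ρ * d := by
      rw [hπ, hdd, ← mul_assoc, hcommute, mul_assoc]
    have hzs : z ∉ c.support := by simp [mem_support, hcz]
    have hct : Multiset.card (Equiv.swap z a * π).cycleType
        = Multiset.card π.cycleType := by
      rw [hfact, hρd.cycleType_mul, hπ, hdρc.cycleType_mul, Multiset.card_add, Multiset.card_add,
        card_cycleType_eq_one.mpr hdc, card_cycleType_eq_one.mpr hcyc]
    have hs : (Equiv.swap z a * π).support.card = π.support.card + 1 := by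
      rw [hfact, hρd.card_support_mul, hπ, hdρc.card_support_mul, hds,
        Finset.card_insert_of_notMem hzs]
      omega
    omega

lemma optionCongr_eq_extendDomain (σ : Equiv.Perm α) :
    σ.optionCongr = σ.extendDomain (Equiv.optionIsSomeEquiv α).symm := by
  apply Equiv.ext
  intro x
  cases x with
  | none =>
    rw [Equiv.Perm.extendDomain_apply_not_subtype]
    · simp
    · simp
  | some a =>
    rw [Equiv.Perm.extendDomain_apply_subtype σ (Equiv.optionIsSomeEquiv α).symm
      (by simp : (Option.some a).isSome = true)]
    simp

lemma xi_optionCongr (σ : Equiv.Perm α) : xi σ.optionCongr = xi σ + 1 := by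
  have hcardπ : σ.support.card ≤ Fintype.card α := Finset.card_le_univ _
  rw [xi_eq, xi_eq, optionCongr_eq_extendDomain, cycleType_extendDomain,
    card_support_extend_domain, Fintype.card_option]
  omega

lemma xi_permCongr {β : Type*} [DecidableEq β] [Fintype β] (e : α ≃ β) (σ : Equiv.Perm α) :
    xi (e.permCongr σ) = xi σ := by
  have hcards : Fintype.card β = Fintype.card α := (Fintype.card_congr e).symm
  have hext : e.permCongr σ
      = σ.extendDomain (e.trans (Equiv.subtypeUnivEquiv (fun _ : β => trivial)).symm) := by
    ext b
    rw [Equiv.Perm.extendDomain_apply_subtype σ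
      (e.trans (Equiv.subtypeUnivEquiv (fun _ : β => trivial)).symm)
      (trivial : (fun _ : β => True) b)]
    simp
  rw [xi_eq, xi_eq, hext, cycleType_extendDomain, card_support_extend_domain, hcards]

lemma sum_pow_xi : ∀ n : ℕ, ∑ s : Equiv.Perm (Fin n), (1.1 : ℝ) ^ xi s
    = ∏ i ∈ Finset.range n, ((1.1 : ℝ) + i) := by
  intro n
  induction n with
  | zero =>
    have h : ∀ s : Equiv.Perm (Fin 0), xi s = 0 := by
      intro s
      have hs : s = 1 := Equiv.ext fun x => x.elim0
      subst hs
      simp [xi, cycleType_one]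
    rw [Finset.range_zero, Finset.prod_empty,
      Finset.sum_congr rfl (fun s _ => by rw [h s, pow_zero])]
    simp [Finset.card_univ, Fintype.card_perm]
  | succ n ih =>
    have e1 : ∑ s : Equiv.Perm (Fin (n+1)), (1.1:ℝ) ^ xi s
        = ∑ s : Equiv.Perm (Option (Fin n)), (1.1:ℝ) ^ xi s :=
      Fintype.sum_equiv (Equiv.permCongr (finSuccEquiv n)) _ _
        (fun s => by rw [xi_permCongr])
    have e2 : ∑ s : Equiv.Perm (Option (Fin n)), (1.1:ℝ) ^ xi s
        = ∑ p : Option (Fin n) × Equiv.Perm (Fin n),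
            (1.1:ℝ) ^ xi (Equiv.Perm.decomposeOption.symm p) :=
      (Fintype.sum_equiv Equiv.Perm.decomposeOption.symm _ _ (fun p => rfl)).symm
    have hnone : ∀ σ : Equiv.Perm (Fin n),
        xi (Equiv.Perm.decomposeOption.symm ((none : Option (Fin n)), σ)) = xi σ + 1 := by
      intro σ
      rw [Equiv.Perm.decomposeOption_symm_apply]
      simp only [Equiv.swap_self]
      rw [show (Equiv.refl (Option (Fin n)) : Equiv.Perm (Option (Fin n))) = 1 from rfl, one_mul]
      exact xi_optionCongr σ
    have hsome : ∀ (a : Fin n) (σ : Equiv.Perm (Fin n)),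
        xi (Equiv.Perm.decomposeOption.symm ((some a : Option (Fin n)), σ)) = xi σ := by
      intro a σ
      rw [Equiv.Perm.decomposeOption_symm_apply]
      have key := xi_swap_mul (σ.optionCongr) (z := (none : Option (Fin n))) (a := some a)
        (by simp) (by simp)
      rw [xi_optionCongr σ] at key
      show xi (Equiv.swap none (some a) * σ.optionCongr) = xi σ
      omega
    rw [e1, e2, Fintype.sum_prod_type, Fintype.sum_option]
    simp only [hnone, hsome, pow_succ, Finset.sum_const, Finset.card_univ, Fintype.card_fin,
      nsmul_eq_mul, ← Finset.sum_mul]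
    rw [ih, Finset.prod_range_succ]
    ring

lemma prod_bound (n : ℕ) : ∏ i ∈ Finset.range n, ((1.1:ℝ) + i)
    ≤ (n.factorial : ℝ) * Real.exp (0.1 * (1 + Real.log n)) := by
  have h1 : ∏ i ∈ Finset.range n, ((1.1:ℝ) + i)
      ≤ ∏ i ∈ Finset.range n, (((i:ℝ)+1) * Real.exp (0.1 / ((i:ℝ)+1))) := by
    apply Finset.prod_le_prod
    · intro i _; positivity
    · intro i _
      have hx : (0.1:ℝ)/((i:ℝ)+1) + 1 ≤ Real.exp (0.1/((i:ℝ)+1)) := Real.add_one_le_exp _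
      have he : (1.1:ℝ) + i = ((i:ℝ)+1) * ((0.1:ℝ)/((i:ℝ)+1) + 1) := by
        field_simp
        ring
      rw [he]
      exact mul_le_mul_of_nonneg_left hx (by positivity)
  have h2 : ∏ i ∈ Finset.range n, (((i:ℝ)+1) * Real.exp (0.1 / ((i:ℝ)+1)))
      = (n.factorial : ℝ) * Real.exp (∑ i ∈ Finset.range n, (0.1:ℝ) / ((i:ℝ)+1)) := by
    rw [Finset.prod_mul_distrib, ← Real.exp_sum]
    congr 1
    rw [← Finset.prod_range_add_one_eq_factorial n, Nat.cast_prod]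
    push_cast
    ring
  have h3 : ∑ i ∈ Finset.range n, (0.1:ℝ) / ((i:ℝ)+1) ≤ 0.1 * (1 + Real.log n) := by
    have hh : ∑ i ∈ Finset.range n, (0.1:ℝ) / ((i:ℝ)+1) = 0.1 * ((harmonic n : ℚ) : ℝ) := by
      rw [harmonic]
      push_cast
      rw [Finset.mul_sum]
      apply Finset.sum_congr rfl
      intro i _
      rw [div_eq_mul_inv]
    rw [hh]
    have := harmonic_le_one_add_log n
    nlinarith [this]
  calc ∏ i ∈ Finset.range n, ((1.1:ℝ) + i) ≤ _ := h1
    _ = _ := h2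
    _ ≤ (n.factorial : ℝ) * Real.exp (0.1 * (1 + Real.log n)) := by
      apply mul_le_mul_of_nonneg_left (Real.exp_le_exp.mpr h3) (by positivity)

/-- For a uniformly random permutation of `{1,…,n}`, the probability that the number of
cycles exceeds `1.1 · ln n` tends to 0 as `n → ∞`. -/
theorem stmt_18 :
    Filter.Tendsto (fun n : ℕ =>
      (Nat.card {s : Equiv.Perm (Fin n) //
          1.1 * Real.log n <
            ((s.cycleType.card + Fintype.card {x : Fin n // s x = x} : ℕ) : ℝ)} : ℝ)
        / (n.factorial : ℝ))
      Filter.atTop (nhds 0) := by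
  classical
  have hc : (0.1:ℝ) - 1.1 * Real.log 1.1 < 0 := by
    have h11 : (1:ℝ) < Real.log ((1.1:ℝ)^(11:ℕ)) := by
      rw [Real.lt_log_iff_exp_lt (by positivity)]
      calc Real.exp 1 < 2.7182818286 := Real.exp_one_lt_d9
        _ < (1.1:ℝ)^(11:ℕ) := by norm_num
    rw [Real.log_pow] at h11
    push_cast at h11
    nlinarith
  have key : ∀ n : ℕ,
      (Nat.card {s : Equiv.Perm (Fin n) //
          1.1 * Real.log n <
            ((s.cycleType.card + Fintype.card {x : Fin n // s x = x} : ℕ) : ℝ)} : ℝ)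
        / (n.factorial : ℝ)
      ≤ Real.exp (0.1 + ((0.1:ℝ) - 1.1 * Real.log 1.1) * Real.log n) := by
    intro n
    set P : Equiv.Perm (Fin n) → Prop := fun s =>
      1.1 * Real.log n
        < ((Multiset.card s.cycleType + Fintype.card {x : Fin n // s x = x} : ℕ) : ℝ) with hP
    have hNat : (Nat.card {s : Equiv.Perm (Fin n) //
          1.1 * Real.log n <
            ((s.cycleType.card + Fintype.card {x : Fin n // s x = x} : ℕ) : ℝ)})
        = (Finset.univ.filter P).card := by
      rw [Nat.card_eq_fintype_card]
      exact Fintype.card_subtype _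
    have hpos : (0:ℝ) < 1.1 := by norm_num
    have hterm : ∀ s : Equiv.Perm (Fin n), P s →
        Real.exp (Real.log 1.1 * (1.1 * Real.log n)) ≤ (1.1:ℝ) ^ xi s := by
      intro s hs
      have h1 : Real.exp (Real.log 1.1 * (1.1 * Real.log n))
          = (1.1:ℝ) ^ (1.1 * Real.log n : ℝ) := (Real.rpow_def_of_pos hpos _).symm
      have h2 : (1.1:ℝ) ^ (1.1 * Real.log n : ℝ) ≤ (1.1:ℝ) ^ ((xi s : ℕ) : ℝ) :=
        Real.rpow_le_rpow_of_exponent_le (by norm_num) (le_of_lt hs)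
      rw [Real.rpow_natCast] at h2
      rw [h1]
      exact h2
    have hcount : ((Finset.univ.filter P).card : ℝ)
        * Real.exp (Real.log 1.1 * (1.1 * Real.log n))
        ≤ ∑ s : Equiv.Perm (Fin n), (1.1:ℝ) ^ xi s := by
      calc ((Finset.univ.filter P).card : ℝ) * Real.exp (Real.log 1.1 * (1.1 * Real.log n))
          = ∑ _s ∈ Finset.univ.filter P, Real.exp (Real.log 1.1 * (1.1 * Real.log n)) := by
            rw [Finset.sum_const, nsmul_eq_mul]
        _ ≤ ∑ s ∈ Finset.univ.filter P, (1.1:ℝ) ^ xi s :=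
            Finset.sum_le_sum (fun s hs => hterm s (Finset.mem_filter.mp hs).2)
        _ ≤ ∑ s : Equiv.Perm (Fin n), (1.1:ℝ) ^ xi s :=
            Finset.sum_le_sum_of_subset_of_nonneg (Finset.filter_subset _ _)
              (fun s _ _ => by positivity)
    have hfact : (0:ℝ) < (n.factorial : ℝ) := by
      exact_mod_cast Nat.cast_pos.mpr n.factorial_pos
    rw [hNat, div_le_iff₀ hfact]
    have hchain : ((Finset.univ.filter P).card : ℝ)
        * Real.exp (Real.log 1.1 * (1.1 * Real.log n))
        ≤ (n.factorial : ℝ) * Real.exp (0.1 * (1 + Real.log n)) := by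
      refine hcount.trans ?_
      rw [sum_pow_xi n]
      exact prod_bound n
    have hexp : Real.exp (0.1 + ((0.1:ℝ) - 1.1 * Real.log 1.1) * Real.log n)
        * Real.exp (Real.log 1.1 * (1.1 * Real.log n)) = Real.exp (0.1 * (1 + Real.log n)) := by
      rw [← Real.exp_add]
      ring_nf
    refine le_of_mul_le_mul_right ?_ (Real.exp_pos (Real.log 1.1 * (1.1 * Real.log n)))
    calc ((Finset.univ.filter P).card : ℝ) * Real.exp (Real.log 1.1 * (1.1 * Real.log n))
        ≤ (n.factorial : ℝ) * Real.exp (0.1 * (1 + Real.log n)) := hchain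
      _ = Real.exp (0.1 + ((0.1:ℝ) - 1.1 * Real.log 1.1) * Real.log n) * (n.factorial : ℝ)
          * Real.exp (Real.log 1.1 * (1.1 * Real.log n)) := by
          rw [← hexp]; ring
  have hlog : Filter.Tendsto (fun n : ℕ => Real.log n) Filter.atTop Filter.atTop :=
    Real.tendsto_log_atTop.comp tendsto_natCast_atTop_atTop
  have hbot : Filter.Tendsto
      (fun n : ℕ => 0.1 + ((0.1:ℝ) - 1.1 * Real.log 1.1) * Real.log n)
      Filter.atTop Filter.atBot :=
    Filter.tendsto_atBot_add_const_left _ _ ((Filter.tendsto_const_mul_atBot_of_neg hc).mpr hlog)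
  have hg : Filter.Tendsto
      (fun n : ℕ => Real.exp (0.1 + ((0.1:ℝ) - 1.1 * Real.log 1.1) * Real.log n))
      Filter.atTop (nhds 0) := Real.tendsto_exp_atBot.comp hbot
  exact squeeze_zero (fun n => by positivity) key hg
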